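/- Let Δ be a 1-dimensional simplicial complex whose graph G_Δ contains two vertex-disjoint induced odd cycles C_1 and C_2 with no edge of G_Δ joining a vertex of C_1 to a vertex of C_2. Let u = x_1⋯x_{2n} t^n be the monomial whose support is V(C_1) ∪ V(C_2) (with |V(C_1)|+|V(C_2)| = 2n) and t-degree n. Then u lies in the quotient field of R_Δ, u² ∈ R_Δ, but u ∉ R_Δ; consequently R_Δ is not integrally closed (not normal). -/

import Mathlib

open MvPolynomial Finset

/-- The monomial generator `x_F t` for `F ⊆ ℕ` (variable `none` is `t`). -/
noncomputable def genN (K : Type*) [Field K] (F : Finset ℕ) :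
    MvPolynomial (Option ℕ) K :=
  X none * ∏ i ∈ F, X (some i)

section Aux

variable {K : Type*} [Field K]

/-- The vertex part of the exponent of `genN K F`. -/
noncomputable def eVert (F : Finset ℕ) : Option ℕ →₀ ℕ :=
  ∑ i ∈ F, Finsupp.single (some i) 1

lemma prodX_eq (F : Finset ℕ) :
    (∏ i ∈ F, X (some i) : MvPolynomial (Option ℕ) K)
      = monomial (∑ i ∈ F, Finsupp.single (some i) 1) 1 := by
  classical
  induction F using Finset.induction with
  | empty => simp [monomial_zero']
  | insert _ _ h ih =>
      rw [Finset.prod_insert h, Finset.sum_insert h, ih, X, monomial_mul, one_mul]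

lemma genN_eq (F : Finset ℕ) :
    genN K F = monomial (Finsupp.single none 1 + ∑ i ∈ F, Finsupp.single (some i) 1) 1 := by
  rw [genN, prodX_eq, X, monomial_mul, one_mul]

lemma list_finsupp_apply {α : Type*} (L : List α) (f : α → (Option ℕ →₀ ℕ)) (x : Option ℕ) :
    (L.map f).sum x = (L.map fun a => f a x).sum := by
  induction L with
  | nil => simp
  | cons a l ih => simp [ih]

lemma eVert_apply_none (F : Finset ℕ) : eVert F none = 0 := by
  simp [eVert, Finsupp.finset_sum_apply, Finsupp.single_apply]

lemma eVert_apply_some (F : Finset ℕ) (j : ℕ) : eVert F (some j) = if j ∈ F then 1 else 0 := by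
  classical
  simp [eVert, Finsupp.finset_sum_apply, Finsupp.single_apply]

lemma list_sum_even {α : Type*} (L : List α) (f : α → ℕ) (h : ∀ x ∈ L, Even (f x)) :
    Even (L.map f).sum := by
  induction L with
  | nil => simp
  | cons a l ih =>
      simp only [List.map_cons, List.sum_cons]
      exact ((h a (by simp)).add (ih fun x hx => h x (List.mem_cons_of_mem a hx)))

lemma list_sum_le {α : Type*} (L : List α) (f : α → ℕ) (h : ∀ x ∈ L, f x ≤ 2) :
    (L.map f).sum ≤ 2 * L.length := by
  induction L with
  | nil => simp
  | cons a l ih =>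
      simp only [List.map_cons, List.sum_cons, List.length_cons]
      have := ih fun x hx => h x (List.mem_cons_of_mem a hx)
      have := h a (by simp)
      omega

lemma list_sum_eq_two {α : Type*} (L : List α) (f : α → ℕ) (h : ∀ x ∈ L, f x ≤ 2)
    (he : (L.map f).sum = 2 * L.length) : ∀ x ∈ L, f x = 2 := by
  induction L with
  | nil => simp
  | cons a l ih =>
      simp only [List.map_cons, List.sum_cons, List.length_cons] at he
      have h1 := list_sum_le l f fun x hx => h x (List.mem_cons_of_mem a hx)
      have h2 := h a (by simp)
      intro x hx
      rcases List.mem_cons.mp hx with rfl | hx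
      · omega
      · exact ih (fun y hy => h y (List.mem_cons_of_mem a hy)) (by omega) x hx

lemma sum_swap_list {α : Type*} (A : Finset ℕ) (L : List α) (f : ℕ → α → ℕ) :
    ∑ i ∈ A, (L.map (f i)).sum = (L.map fun F => ∑ i ∈ A, f i F).sum := by
  induction L with
  | nil => simp
  | cons a l ih => simp [Finset.sum_add_distrib, ih]

/-- Every product of generators is a monomial with a structured exponent. -/
lemma closure_prod (Δ : Set (Finset ℕ)) :
    ∀ l : List (MvPolynomial (Option ℕ) K),
      (∀ y ∈ l, y ∈ {g | ∃ F ∈ Δ, g = genN K F}) →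
      ∃ L : List (Finset ℕ), (∀ F ∈ L, F ∈ Δ) ∧
        l.prod = monomial (Finsupp.single none L.length + (L.map eVert).sum) 1 := by
  intro l
  induction l with
  | nil => intro _; exact ⟨[], by simp, by simp [monomial_zero']⟩
  | cons a l ih =>
      intro h
      obtain ⟨F, hF, rfl⟩ := h a (by simp)
      obtain ⟨L, hL, hprod⟩ := ih fun y hy => h y (List.mem_cons_of_mem _ hy)
      refine ⟨F :: L, ?_, ?_⟩
      · intro G hG
        rcases List.mem_cons.mp hG with rfl | hG
        · exact hF
        · exact hL G hG
      · rw [List.prod_cons, hprod, genN_eq, monomial_mul, one_mul]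
        congr 1
        simp only [List.map_cons, List.sum_cons, List.length_cons, eVert]
        rw [show (L.length : ℕ) + 1 = 1 + L.length by omega, Finsupp.single_add]
        abel

/-- The key combinatorial fact: no product of generators has the exponent of `u`. -/
lemma not_exponent (m n : ℕ) (hm : 2 ≤ m) (hn : m + 1 ≤ n)
    (Δ : Set (Finset ℕ))
    (hvert : ∀ F ∈ Δ, ∀ v ∈ F, v ∈ Finset.Icc 1 (2 * n))
    (hdim : ∀ F ∈ Δ, F.card ≤ 2)
    (hcross : ∀ i j, 1 ≤ i → i ≤ 2 * m - 1 → 2 * m ≤ j → j ≤ 2 * n →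
      ({i, j} : Finset ℕ) ∉ Δ)
    (L : List (Finset ℕ)) (hL : ∀ F ∈ L, F ∈ Δ) :
    Finsupp.single none L.length + (L.map eVert).sum ≠
      Finsupp.single none n + ∑ i ∈ Finset.Icc 1 (2 * n), Finsupp.single (some i) 1 := by
  classical
  intro heq
  -- evaluate at none
  have hnone : L.length = n := by
    have h := DFunLike.congr_fun heq none
    rw [Finsupp.add_apply, Finsupp.add_apply, list_finsupp_apply] at h
    simp [Finsupp.single_apply, eVert_apply_none, Finsupp.finset_sum_apply] at h
    exact h
  -- counts
  have hcnt : ∀ j : ℕ, (L.map fun F => if j ∈ F then 1 else 0).sum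
      = if j ∈ Finset.Icc 1 (2 * n) then 1 else 0 := by
    intro j
    have h := DFunLike.congr_fun heq (some j)
    rw [Finsupp.add_apply, Finsupp.add_apply, list_finsupp_apply] at h
    simp only [eVert_apply_some] at h
    simp [Finsupp.single_apply, Finsupp.finset_sum_apply] at h
    simpa using h
  -- each face has card 2
  have hcards : ∀ F ∈ L, F.card = 2 := by
    apply list_sum_eq_two L _ (fun F hF => hdim F (hL F hF))
    have key : ∀ F ∈ L, F.card = ∑ i ∈ Finset.Icc 1 (2*n), if i ∈ F then 1 else 0 := by
      intro F hF
      rw [Finset.sum_ite_mem, ← Finset.card_eq_sum_ones,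
        Finset.inter_eq_right.mpr (fun v hv => hvert F (hL F hF) v hv)]
    rw [List.map_congr_left key, ← sum_swap_list,
      Finset.sum_congr rfl (fun j hj => (hcnt j).trans (if_pos hj))]
    simp only [Finset.sum_const, smul_eq_mul, mul_one, Nat.card_Icc, hnone]
    omega
  -- parity on V1
  have hV1sub : Finset.Icc 1 (2*m-1) ⊆ Finset.Icc 1 (2*n) := by
    apply Finset.Icc_subset_Icc le_rfl; omega
  have hsum1 : ∑ j ∈ Finset.Icc 1 (2*m-1), (L.map fun F => if j ∈ F then 1 else 0).sum
      = 2*m - 1 := by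
    rw [Finset.sum_congr rfl (fun j hj => (hcnt j).trans (if_pos (hV1sub hj)))]
    simp only [Finset.sum_const, smul_eq_mul, mul_one, Nat.card_Icc]
    omega
  rw [sum_swap_list] at hsum1
  have heven : Even ((L.map fun F => ∑ i ∈ Finset.Icc 1 (2*m-1), if i ∈ F then 1 else 0).sum) := by
    apply list_sum_even
    intro F hF
    rw [Finset.sum_ite_mem, ← Finset.card_eq_sum_ones]
    obtain ⟨a, b, hab, rfl⟩ := Finset.card_eq_two.mp (hcards F hF)
    by_cases ha : a ∈ Finset.Icc 1 (2*m-1) <;> by_cases hb : b ∈ Finset.Icc 1 (2*m-1)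
    · rw [Finset.inter_eq_right.mpr (by intro x hx; simp at hx; rcases hx with rfl|rfl <;> assumption)]
      rw [Finset.card_pair hab]; exact even_two
    · exfalso
      have hbv := hvert _ (hL _ hF) b (by simp)
      simp only [Finset.mem_Icc] at ha hb hbv
      exact hcross a b (by omega) (by omega) (by omega) (by omega) (hL _ hF)
    · exfalso
      have hav := hvert _ (hL _ hF) a (by simp)
      simp only [Finset.mem_Icc] at ha hb hav
      have hba : ({b, a} : Finset ℕ) ∈ Δ := by
        rw [Finset.pair_comm]; exact hL _ hF
      exact hcross b a (by omega) (by omega) (by omega) (by omega) hba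
    · rw [show Finset.Icc 1 (2*m-1) ∩ {a,b} = ∅ by
        ext x; simp only [Finset.mem_inter, Finset.mem_insert, Finset.mem_singleton,
          Finset.notMem_empty, iff_false]
        rintro ⟨hx, rfl|rfl⟩
        · exact ha hx
        · exact hb hx]
      simp
  rw [hsum1] at heven
  obtain ⟨r, hr⟩ := heven
  omega

lemma prod_Icc_join {M : Type*} [CommMonoid M] (f : ℕ → M) (a b c : ℕ)
    (hab : a ≤ b + 1) (hbc : b ≤ c) :
    (∏ k ∈ Icc a b, f k) * (∏ k ∈ Icc (b+1) c, f k) = ∏ k ∈ Icc a c, f k := by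
  rw [← Finset.Ico_add_one_right_eq_Icc, ← Finset.Ico_add_one_right_eq_Icc, ← Finset.Ico_add_one_right_eq_Icc]
  exact Finset.prod_Ico_consecutive f hab (by omega)

lemma cycle_eq (a b : ℕ) (hab : a < b) :
    ((∏ k ∈ Icc a (b-1), genN K {k, k+1}) * genN K {a, b})
      = X none ^ (b - a + 1) * ∏ k ∈ Icc a b, X (some k) ^ 2 := by
  obtain ⟨c, rfl⟩ : ∃ c, b = a + c + 1 := ⟨b - a - 1, by omega⟩
  have hb1 : a + c + 1 - 1 = a + c := by omega
  have hba : a + c + 1 - a + 1 = c + 2 := by omega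
  rw [hb1, hba]
  have h1 : ∀ k : ℕ, genN K ({k, k+1} : Finset ℕ)
      = X none * (X (some k) * X (some (k+1))) := by
    intro k; rw [genN, Finset.prod_pair (by omega : k ≠ k+1)]
  have h2 : genN K ({a, a + c + 1} : Finset ℕ)
      = X none * (X (some a) * X (some (a + c + 1))) := by
    rw [genN, Finset.prod_pair (by omega : a ≠ a + c + 1)]
  simp only [h1, h2]
  rw [Finset.prod_mul_distrib, Finset.prod_const, Nat.card_Icc]
  have hc1 : a + c + 1 - a = c + 1 := by omega
  rw [hc1, Finset.prod_mul_distrib]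
  have h3 : (∏ k ∈ Icc a (a+c), X (some (k+1)) : MvPolynomial (Option ℕ) K)
      = ∏ k ∈ Icc (a+1) (a+c+1), X (some k) := by
    rw [show a + 1 = a + 1 by rfl, show a + c + 1 = (a + c) + 1 by rfl,
      ← Finset.map_add_right_Icc a (a+c) 1, Finset.prod_map]
    rfl
  rw [h3]
  have h4 : (X (some a) * ∏ k ∈ Icc (a+1) (a+c+1), X (some k) : MvPolynomial (Option ℕ) K)
      = ∏ k ∈ Icc a (a+c+1), X (some k) := by
    rw [Finset.Icc_add_one_left_eq_Ioc, ← Finset.Ioc_insert_left (by omega : a ≤ a + c + 1),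
      Finset.prod_insert (by simp)]
  have h5 : ((∏ k ∈ Icc a (a+c), X (some k)) * X (some (a+c+1)) : MvPolynomial (Option ℕ) K)
      = ∏ k ∈ Icc a (a+c+1), X (some k) := by
    rw [← Finset.prod_Icc_succ_top (by omega : a ≤ a + c + 1)]
  have h6 : (∏ k ∈ Icc a (a+c+1), X (some k) ^ 2 : MvPolynomial (Option ℕ) K)
      = (∏ k ∈ Icc a (a+c+1), X (some k)) * (∏ k ∈ Icc a (a+c+1), X (some k)) := by
    rw [← Finset.prod_mul_distrib]
    exact Finset.prod_congr rfl fun k _ => sq (X (some k))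
  rw [h6]
  nth_rewrite 1 [← h4]
  rw [← h5]
  ring

end Aux

set_option maxHeartbeats 1000000 in
set_option synthInstance.maxHeartbeats 1000000 in
/-- Let `Δ` be a 1-dimensional simplicial complex on the vertex set `{1,…,2n}` whose graph
contains the two vertex-disjoint induced odd cycles `C₁` on `{1,…,2m-1}` and `C₂` on
`{2m,…,2n}`, with no edge of `G_Δ` joining them. Then `u = x_1⋯x_{2n} tⁿ` lies in the
quotient field of `R_Δ`, `u² ∈ R_Δ`, but `u ∉ R_Δ`; consequently `R_Δ` is not normal. -/
theorem stmt6 {K : Type*} [Field K] (m n : ℕ) (hm : 2 ≤ m) (hn : m + 1 ≤ n)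
    (Δ : Set (Finset ℕ))
    (hempty : ∅ ∈ Δ)
    (hsub : ∀ F ∈ Δ, ∀ G ⊆ F, G ∈ Δ)
    (hvert : ∀ F ∈ Δ, ∀ v ∈ F, v ∈ Finset.Icc 1 (2 * n))
    (hdim : ∀ F ∈ Δ, F.card ≤ 2)
    (hC1 : ∀ k, 1 ≤ k → k ≤ 2 * m - 2 → ({k, k + 1} : Finset ℕ) ∈ Δ)
    (hC1' : ({1, 2 * m - 1} : Finset ℕ) ∈ Δ)
    (hC2 : ∀ k, 2 * m ≤ k → k ≤ 2 * n - 1 → ({k, k + 1} : Finset ℕ) ∈ Δ)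
    (hC2' : ({2 * m, 2 * n} : Finset ℕ) ∈ Δ)
    (hcross : ∀ i j, 1 ≤ i → i ≤ 2 * m - 1 → 2 * m ≤ j → j ≤ 2 * n →
      ({i, j} : Finset ℕ) ∉ Δ)
    (u : MvPolynomial (Option ℕ) K)
    (hu : u = (∏ i ∈ Finset.Icc 1 (2 * n), X (some i)) * X none ^ n) :
    (∃ a b : Algebra.adjoin K {g | ∃ F ∈ Δ, g = genN K F}, b ≠ 0 ∧
      (b : MvPolynomial (Option ℕ) K) * u = a) ∧
    u ^ 2 ∈ Algebra.adjoin K {g | ∃ F ∈ Δ, g = genN K F} ∧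
    u ∉ Algebra.adjoin K {g | ∃ F ∈ Δ, g = genN K F} ∧
    ¬ IsIntegrallyClosed (Algebra.adjoin K {g | ∃ F ∈ Δ, g = genN K F}) := by
  classical
  set S : Set (MvPolynomial (Option ℕ) K) := {g | ∃ F ∈ Δ, g = genN K F} with hS
  -- singletons are faces
  have hsingle : ∀ i ∈ Finset.Icc 1 (2 * n), ({i} : Finset ℕ) ∈ Δ := by
    intro i hi
    simp only [Finset.mem_Icc] at hi
    by_cases h1 : i ≤ 2 * m - 2
    · exact hsub _ (hC1 i hi.1 h1) {i} (by simp)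
    · by_cases h2 : i = 2 * m - 1
      · exact hsub _ hC1' {i} (by subst h2; simp)
      · by_cases h3 : i ≤ 2 * n - 1
        · exact hsub _ (hC2 i (by omega) h3) {i} (by simp)
        · have : i = 2 * n := by omega
          exact hsub _ hC2' {i} (by subst this; simp)
  -- Part 1 : u is in the quotient field
  have part1 : ∃ a b : Algebra.adjoin K S, b ≠ 0 ∧
      (b : MvPolynomial (Option ℕ) K) * u = a := by
    have hXnone : (X none : MvPolynomial (Option ℕ) K) ∈ Algebra.adjoin K S := by
      apply Algebra.subset_adjoin
      exact ⟨∅, hempty, by simp [genN]⟩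
    have hamem : (∏ i ∈ Finset.Icc 1 (2 * n), genN K {i}) ∈ Algebra.adjoin K S := by
      apply Subalgebra.prod_mem
      intro i hi
      exact Algebra.subset_adjoin ⟨{i}, hsingle i hi, rfl⟩
    refine ⟨⟨_, hamem⟩, ⟨X none ^ n, pow_mem hXnone n⟩, ?_, ?_⟩
    · intro h
      have := congrArg (Subtype.val) h
      simp only [ZeroMemClass.coe_zero] at this
      exact pow_ne_zero n (X_ne_zero (none : Option ℕ)) this
    · show (X none : MvPolynomial (Option ℕ) K) ^ n * u
        = ∏ i ∈ Finset.Icc 1 (2 * n), genN K {i}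
      simp only [genN, Finset.prod_singleton]
      rw [Finset.prod_mul_distrib, Finset.prod_const, Nat.card_Icc, hu,
        show 2*n+1-1 = 2*n from by omega]
      ring
  -- Part 2 : u ^ 2 ∈ R
  have part2 : u ^ 2 ∈ Algebra.adjoin K S := by
    have hmem1 : ((∏ k ∈ Icc 1 (2*m-1-1), genN K {k, k+1}) * genN K {1, 2*m-1})
        ∈ Algebra.adjoin K S := by
      refine mul_mem (Subalgebra.prod_mem _ fun k hk => ?_)
        (Algebra.subset_adjoin ⟨_, hC1', rfl⟩)
      simp only [Finset.mem_Icc] at hk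
      exact Algebra.subset_adjoin ⟨_, hC1 k hk.1 (by omega), rfl⟩
    have hmem2 : ((∏ k ∈ Icc (2*m) (2*n-1), genN K {k, k+1}) * genN K {2*m, 2*n})
        ∈ Algebra.adjoin K S := by
      refine mul_mem (Subalgebra.prod_mem _ fun k hk => ?_)
        (Algebra.subset_adjoin ⟨_, hC2', rfl⟩)
      simp only [Finset.mem_Icc] at hk
      exact Algebra.subset_adjoin ⟨_, hC2 k hk.1 hk.2, rfl⟩
    have hsplit : (∏ k ∈ Icc 1 (2*m-1), (X (some k):MvPolynomial (Option ℕ) K) ^ 2)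
        * (∏ k ∈ Icc (2*m) (2*n), (X (some k):MvPolynomial (Option ℕ) K) ^ 2)
        = ∏ k ∈ Icc 1 (2*n), (X (some k):MvPolynomial (Option ℕ) K) ^ 2 := by
      have h := prod_Icc_join (fun k => (X (some k):MvPolynomial (Option ℕ) K) ^ 2)
        1 (2*m-1) (2*n) (by omega) (by omega)
      rw [show 2*m - 1 + 1 = 2*m by omega] at h
      exact h
    have key : u ^ 2 = ((∏ k ∈ Icc 1 (2*m-1-1), genN K {k, k+1}) * genN K {1, 2*m-1})
        * ((∏ k ∈ Icc (2*m) (2*n-1), genN K {k, k+1}) * genN K {2*m, 2*n}) := by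
      rw [hu, cycle_eq 1 (2*m-1) (by omega), cycle_eq (2*m) (2*n) (by omega),
        mul_pow, ← Finset.prod_pow, ← pow_mul,
        show n*2 = (2*m-1-1+1)+(2*n-2*m+1) from by omega, ← hsplit, pow_add]
      ring
    rw [key]
    exact mul_mem hmem1 hmem2
  -- Part 3 : u ∉ R
  have part3 : u ∉ Algebra.adjoin K S := by
    intro hmem
    have hspan : u ∈ Submodule.span K ((Submonoid.closure S : Submonoid _) : Set _) := by
      rw [← Algebra.adjoin_eq_span]
      exact hmem
    have hcoef : coeff (Finsupp.single none n
        + ∑ i ∈ Finset.Icc 1 (2 * n), Finsupp.single (some i) 1) u = 0 := by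
      refine Submodule.span_induction ?_ ?_ ?_ ?_ hspan
      · intro g hg
        obtain ⟨l, hl, rfl⟩ := Submonoid.exists_list_of_mem_closure hg
        obtain ⟨L, hL, hprod⟩ := closure_prod Δ l hl
        rw [hprod, coeff_monomial, if_neg]
        exact not_exponent m n hm hn Δ hvert hdim hcross L hL
      · simp
      · intro x y _ _ hx hy
        rw [coeff_add, hx, hy, add_zero]
      · intro c x _ hx
        rw [smul_eq_C_mul, coeff_C_mul, hx, mul_zero]
    have : coeff (Finsupp.single none n
        + ∑ i ∈ Finset.Icc 1 (2 * n), Finsupp.single (some i) 1) u = 1 := by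
      rw [hu, prodX_eq, X_pow_eq_monomial, monomial_mul, one_mul, coeff_monomial,
        if_pos (by rw [add_comm])]
    rw [this] at hcoef
    exact one_ne_zero hcoef
  refine ⟨part1, part2, part3, ?_⟩
  -- Part 4 : not integrally closed
  intro hIC
  letI : IsIntegrallyClosed ↥(Algebra.adjoin K S) := hIC
  obtain ⟨aR, bR, hb0, hba⟩ := part1
  set i := algebraMap ↥(Algebra.adjoin K S)
    (FractionRing ↥(Algebra.adjoin K S)) with hi
  have hinj : Function.Injective i :=
    IsFractionRing.injective ↥(Algebra.adjoin K S) (FractionRing ↥(Algebra.adjoin K S))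
  have hib : i bR ≠ 0 := fun h => hb0 (hinj (by rw [h, map_zero]))
  set w : ↥(Algebra.adjoin K S) := ⟨u ^ 2, part2⟩ with hw
  set x : FractionRing ↥(Algebra.adjoin K S) := i aR / i bR with hx
  have hbMv : (bR : MvPolynomial (Option ℕ) K) ≠ 0 := by
    intro h
    exact hb0 (Subtype.ext (by rw [h]; rfl))
  have hkey : aR * aR = bR * bR * w := by
    apply Subtype.ext
    push_cast
    rw [← hba]
    ring
  have hx2 : x ^ 2 = i w := by
    have h1 : i (aR * aR) = i (bR * bR * w) := congrArg i hkey
    rw [map_mul, map_mul, map_mul] at h1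
    rw [hx, div_pow, pow_two (i aR), pow_two (i bR), h1]
    exact mul_div_cancel_left₀ _ (mul_ne_zero hib hib)
  have hint : IsIntegral ↥(Algebra.adjoin K S) x := by
    refine ⟨Polynomial.X ^ 2 - Polynomial.C w, ?_, ?_⟩
    · exact Polynomial.monic_X_pow_sub_C w (by norm_num)
    · simp only [Polynomial.eval₂_sub, Polynomial.eval₂_pow, Polynomial.eval₂_X,
        Polynomial.eval₂_C, ← hi, hx2, sub_self]
  obtain ⟨y, hy⟩ := IsIntegrallyClosed.isIntegral_iff.mp hint
  have hxb : x * i bR = i aR := by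
    rw [hx, div_mul_cancel₀ _ hib]
  have h5 : y * bR = aR := by
    apply hinj
    rw [map_mul, hy, hxb]
  have h6 : (y : MvPolynomial (Option ℕ) K) * bR = (aR : MvPolynomial (Option ℕ) K) := by
    have := congrArg (Subtype.val) h5
    push_cast at this
    exact this
  have h7 : (y : MvPolynomial (Option ℕ) K) = u := by
    apply mul_left_cancel₀ hbMv
    rw [mul_comm ((bR : MvPolynomial (Option ℕ) K)) ((y : MvPolynomial (Option ℕ) K)), h6, ← hba]
  exact part3 (h7 ▸ y.2)
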